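/- Let p be a prime, A an F-finite Noetherian normal integral domain of characteristic p, g ∈ A a nonzero element whose divisor on Spec A is reduced, and t ≥ 0 a rational number. Then the pair (A, t·div(g)) is strongly F-regular — i.e., for every nonzero c ∈ A there exists an integer e ≥ 1 such that c·g^{⌊t(p^e−1)⌋} admits a p^e-splitting in A — if and only if for every nonzero c ∈ A there exists e₀ such that for all integers e ≥ e₀ the element c·g^{⌊t·p^e⌋} admits a p^e-splitting in A. -/

import Mathlib

/-- `c` admits a `p^e`-splitting in `A`: there is an additive map `φ : A → A` with
`φ (a^(p^e) * b) = a * φ b` for all `a b` and `φ c = 1`. -/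
def AdmitsSplitting (p e : ℕ) {A : Type*} [CommRing A] (c : A) : Prop :=
  ∃ φ : A →+ A, (∀ a b : A, φ (a ^ p ^ e * b) = a * φ b) ∧ φ c = 1

/-- `A` is F-finite: `A` is a finitely generated module over its subring of `p`-th powers. -/
def FFinite (p : ℕ) (A : Type*) [CommRing A] : Prop :=
  ∃ (n : ℕ) (v : Fin n → A), ∀ a : A, ∃ c : Fin n → A, a = ∑ i, c i ^ p * v i

/-- The divisor of `g` on `Spec A` is reduced: at every height-one prime `P` containing `g`
(equivalently, every minimal prime over `gA`), the image of `g` in the local ring `A_P`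
has valuation `1`, i.e. it lies outside the square of the maximal ideal. -/
def HasReducedDivisor {A : Type*} [CommRing A] (g : A) : Prop :=
  ∀ (P : Ideal A) [P.IsPrime], P ∈ (Ideal.span {g}).minimalPrimes →
    algebraMap A (Localization.AtPrime P) g ∉
      (IsLocalRing.maximalIdeal (Localization.AtPrime P)) ^ 2

section Aux

variable {A : Type*} [CommRing A] {p : ℕ}

/-- A splitting of a multiple gives a splitting of the factor. -/
lemma AdmitsSplitting.of_mul_right {e : ℕ} {c : A} (d : A)
    (h : AdmitsSplitting p e (c * d)) : AdmitsSplitting p e c := by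
  obtain ⟨φ, hφ, hc⟩ := h
  refine ⟨φ.comp (AddMonoidHom.mulLeft d), fun a b => ?_, ?_⟩
  · simp only [AddMonoidHom.coe_comp, Function.comp_apply, AddMonoidHom.coe_mulLeft]
    rw [show d * (a ^ p ^ e * b) = a ^ p ^ e * (d * b) by ring, hφ]
  · simp only [AddMonoidHom.coe_comp, Function.comp_apply, AddMonoidHom.coe_mulLeft]
    rw [show d * c = c * d by ring, hc]

/-- Composition of splittings. -/
lemma AdmitsSplitting.comp {e f : ℕ} {c d : A} (hc : AdmitsSplitting p e c)
    (hd : AdmitsSplitting p f d) : AdmitsSplitting p (e + f) (c ^ p ^ f * d) := by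
  obtain ⟨φ, hφ, hφc⟩ := hc
  obtain ⟨ψ, hψ, hψd⟩ := hd
  refine ⟨φ.comp ψ, fun a b => ?_, ?_⟩
  · simp only [AddMonoidHom.coe_comp, Function.comp_apply]
    rw [pow_add, pow_mul, hψ, hφ]
  · simp only [AddMonoidHom.coe_comp, Function.comp_apply]
    rw [hψ, hψd, mul_one, hφc]

/-- Downgrade: a splitting of `g^n` at level `e+1` gives one of `g^(n/p)` at level `e`. -/
lemma AdmitsSplitting.downgrade (hp : p.Prime) [CharP A p] {e n : ℕ} {g : A}
    (h : AdmitsSplitting p (e + 1) (g ^ n)) : AdmitsSplitting p e (g ^ (n / p)) := by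
  haveI := Fact.mk hp
  obtain ⟨φ, hφ, hc⟩ := h
  refine ⟨{ toFun := fun x => φ (g ^ (n % p) * x ^ p),
            map_zero' := by
              show φ (g ^ (n % p) * 0 ^ p) = 0
              rw [zero_pow hp.ne_zero, mul_zero, map_zero],
            map_add' := fun x y => by
              show φ (g ^ (n % p) * (x + y) ^ p)
                = φ (g ^ (n % p) * x ^ p) + φ (g ^ (n % p) * y ^ p)
              rw [add_pow_char x y p, mul_add, map_add] }, fun a b => ?_, ?_⟩
  · show φ (g ^ (n % p) * (a ^ p ^ e * b) ^ p) = a * φ (g ^ (n % p) * b ^ p)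
    rw [show g ^ (n % p) * (a ^ p ^ e * b) ^ p
        = a ^ p ^ (e + 1) * (g ^ (n % p) * b ^ p) by
      rw [mul_pow, ← pow_mul, ← pow_succ]; ring, hφ]
  · show φ (g ^ (n % p) * (g ^ (n / p)) ^ p) = 1
    rw [← pow_mul, ← pow_add, show n % p + n / p * p = n from Nat.mod_add_div' n p, hc]

/-- Iterated downgrade. -/
lemma AdmitsSplitting.downgrade_iter (hp : p.Prime) [CharP A p] {g : A} :
    ∀ (r e n : ℕ), AdmitsSplitting p (e + r) (g ^ n) →
      AdmitsSplitting p e (g ^ (n / p ^ r))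
  | 0, e, n, h => by simpa using h
  | r + 1, e, n, h => by
    have h' : AdmitsSplitting p ((e + r) + 1) (g ^ n) := by
      rwa [show (e + r) + 1 = e + (r + 1) by omega]
    have := AdmitsSplitting.downgrade_iter hp r e (n / p) (h'.downgrade hp)
    rwa [Nat.div_div_eq_div_mul, ← pow_succ'] at this

end Aux

/-- The pair `(A, t·div g)` is strongly F-regular iff for every nonzero `c` the elements
`c * g^⌊t·p^e⌋` admit `p^e`-splittings for all sufficiently large `e`. -/
theorem stmt_2 (p : ℕ) (hp : p.Prime) (A : Type*) [CommRing A] [IsDomain A]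
    [IsNoetherianRing A] [IsIntegrallyClosed A] [CharP A p]
    (hFF : FFinite p A) (g : A) (hg : g ≠ 0) (hred : HasReducedDivisor g)
    (t : ℚ) (ht : 0 ≤ t) :
    (∀ c : A, c ≠ 0 →
      ∃ e : ℕ, 1 ≤ e ∧ AdmitsSplitting p e (c * g ^ ⌊t * ((p : ℚ) ^ e - 1)⌋₊)) ↔
    (∀ c : A, c ≠ 0 →
      ∃ e₀ : ℕ, ∀ e : ℕ, e₀ ≤ e → AdmitsSplitting p e (c * g ^ ⌊t * (p : ℚ) ^ e⌋₊)) := by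
  have hp2 : (2 : ℚ) ≤ (p : ℚ) := by exact_mod_cast hp.two_le
  have hppos : (0 : ℚ) < (p : ℚ) := by linarith
  constructor
  · -- hard direction
    intro H c hc
    -- Step 1: a splitting of a big power of g at some level f₀ ≥ 1
    obtain ⟨f₀, hf₀1, hsplitg⟩ := H g hg
    set m₀ : ℕ := ⌊t * ((p : ℚ) ^ f₀ - 1)⌋₊ + 1 with hm₀
    have hQf₀ : AdmitsSplitting p f₀ (g ^ m₀) := by
      rw [hm₀, pow_succ, mul_comm]; exact hsplitg
    set Pq : ℚ := (p : ℚ) ^ f₀ with hPq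
    have hPq1 : (1 : ℚ) < Pq := by
      calc (1:ℚ) < 2 := by norm_num
        _ ≤ (p:ℚ)^1 := by rwa [pow_one]
        _ ≤ Pq := pow_le_pow_right₀ (by linarith) hf₀1
    have hm₀big : t * (Pq - 1) < (m₀ : ℚ) := by
      rw [hm₀, hPq]; push_cast
      exact Nat.lt_floor_add_one _
    set ε : ℚ := (m₀ : ℚ) - t * (Pq - 1) with hε
    have hεpos : 0 < ε := by rw [hε]; linarith
    have hm₀eq : (m₀ : ℚ) = t * (Pq - 1) + ε := by rw [hε]; ring
    -- geometric self-composition of hQf₀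
    set mg : ℕ → ℕ := fun k => Nat.rec m₀ (fun _ mk => mk * p ^ f₀ + m₀) k with hmg
    have hmg0 : mg 0 = m₀ := rfl
    have hmgs : ∀ k, mg (k + 1) = mg k * p ^ f₀ + m₀ := fun k => rfl
    have hQmg : ∀ k, AdmitsSplitting p ((k + 1) * f₀) (g ^ mg k) := by
      intro k
      induction k with
      | zero => simpa [hmg0, one_mul] using hQf₀
      | succ k ih =>
        have := ih.comp hQf₀
        rw [← pow_mul, ← pow_add, ← hmgs k] at this
        rwa [show (k + 1 + 1) * f₀ = (k + 1) * f₀ + f₀ by ring]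
    have hmgval : ∀ k, (mg k : ℚ) * (Pq - 1) = (m₀ : ℚ) * (Pq ^ (k + 1) - 1) := by
      intro k
      induction k with
      | zero => rw [hmg0]; ring_nf
      | succ k ih =>
        rw [hmgs k, Nat.cast_add, Nat.cast_mul, Nat.cast_pow, ← hPq]
        rw [show ((mg k : ℚ) * Pq + (m₀:ℚ)) * (Pq - 1)
            = ((mg k : ℚ) * (Pq - 1)) * Pq + (m₀:ℚ) * (Pq - 1) by ring, ih]
        ring
    -- Step 2: at every level d ≥ 1, a splitting of g^n with n large
    have key : ∀ d : ℕ, 1 ≤ d → ∃ n : ℕ, AdmitsSplitting p d (g ^ n) ∧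
        (m₀ : ℚ) * ((p : ℚ) ^ d - 1) ≤ ((n : ℚ) + 1) * (Pq - 1) := by
      intro d hd
      have hf₀pos : 0 < f₀ := hf₀1
      set k : ℕ := (d - 1) / f₀ with hk
      have hdle : d ≤ (k + 1) * f₀ := by
        have h1 := Nat.div_add_mod (d - 1) f₀
        have h2 := Nat.mod_lt (d - 1) hf₀pos
        have : d - 1 < (k + 1) * f₀ := by
          calc d - 1 = f₀ * ((d-1)/f₀) + (d-1) % f₀ := h1.symm
            _ < f₀ * ((d-1)/f₀) + f₀ := by omega
            _ = (k + 1) * f₀ := by rw [hk]; ring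
        omega
      set r : ℕ := (k + 1) * f₀ - d with hr
      have hdr : d + r = (k + 1) * f₀ := by omega
      have hQ : AdmitsSplitting p (d + r) (g ^ mg k) := by rw [hdr]; exact hQmg k
      refine ⟨mg k / p ^ r, AdmitsSplitting.downgrade_iter hp r d (mg k) hQ, ?_⟩
      -- the bound
      have hprpos : (0 : ℚ) < (p : ℚ) ^ r := pow_pos hppos r
      have hdiv : (mg k : ℚ) < (((mg k / p ^ r : ℕ) : ℚ) + 1) * (p : ℚ) ^ r := by
        have hb : 0 < p ^ r := pow_pos hp.pos r
        have h1 := Nat.div_add_mod (mg k) (p ^ r)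
        have h2 := Nat.mod_lt (mg k) hb
        have : mg k < (mg k / p ^ r + 1) * p ^ r := by
          calc mg k = p ^ r * (mg k / p ^ r) + mg k % p ^ r := h1.symm
            _ < p ^ r * (mg k / p ^ r) + p ^ r := by omega
            _ = (mg k / p ^ r + 1) * p ^ r := by ring
        exact_mod_cast this
      have hPkr : Pq ^ (k + 1) = (p : ℚ) ^ d * (p : ℚ) ^ r := by
        rw [hPq, ← pow_mul, show f₀ * (k+1) = d + r by rw [hdr, Nat.mul_comm], pow_add]
      have hpr1 : (1 : ℚ) ≤ (p : ℚ) ^ r := by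
        calc (1:ℚ) = 1 ^ r := (one_pow r).symm
          _ ≤ (p:ℚ) ^ r := pow_le_pow_left₀ (by norm_num) (by linarith) r
      have h1 : (m₀ : ℚ) * (((p : ℚ) ^ d - 1) * (p : ℚ) ^ r)
          ≤ (m₀ : ℚ) * (Pq ^ (k + 1) - 1) := by
        apply mul_le_mul_of_nonneg_left _ (by positivity)
        rw [hPkr]; nlinarith
      have h3 : (mg k : ℚ) * (Pq - 1)
          ≤ ((((mg k / p ^ r : ℕ) : ℚ)) + 1) * (p : ℚ) ^ r * (Pq - 1) :=
        mul_le_mul_of_nonneg_right (le_of_lt hdiv) (by linarith)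
      have hfinal : (m₀ : ℚ) * (((p : ℚ) ^ d - 1) * (p : ℚ) ^ r)
          ≤ (((mg k / p ^ r : ℕ) : ℚ) + 1) * (p : ℚ) ^ r * (Pq - 1) :=
        le_trans h1 (le_trans (le_of_eq (hmgval k).symm) h3)
      refine le_of_mul_le_mul_right ?_ hprpos
      calc (m₀ : ℚ) * ((p : ℚ) ^ d - 1) * (p : ℚ) ^ r
          = (m₀ : ℚ) * (((p : ℚ) ^ d - 1) * (p : ℚ) ^ r) := by ring
        _ ≤ (((mg k / p ^ r : ℕ) : ℚ) + 1) * (p : ℚ) ^ r * (Pq - 1) := hfinal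
        _ = (((mg k / p ^ r : ℕ) : ℚ) + 1) * (Pq - 1) * (p : ℚ) ^ r := by ring
    -- Step 3: base splitting for c
    have hc' : c * g ^ (⌈t⌉₊) ≠ 0 := mul_ne_zero hc (pow_ne_zero _ hg)
    obtain ⟨e₁, he₁1, hbase0⟩ := H (c * g ^ (⌈t⌉₊)) hc'
    set n₁ : ℕ := ⌈t⌉₊ + ⌊t * ((p:ℚ) ^ e₁ - 1)⌋₊ with hn₁
    have hbase : AdmitsSplitting p e₁ (c * g ^ n₁) := by
      rw [hn₁, pow_add, ← mul_assoc]; exact hbase0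
    have hn₁big : t * (p:ℚ) ^ e₁ - 1 ≤ (n₁ : ℚ) := by
      rw [hn₁]; push_cast
      have h1 : t ≤ (⌈t⌉₊ : ℚ) := Nat.le_ceil t
      have h2 : t * ((p:ℚ) ^ e₁ - 1) < (⌊t * ((p:ℚ) ^ e₁ - 1)⌋₊ : ℚ) + 1 :=
        Nat.lt_floor_add_one _
      nlinarith
    -- Step 4: choose d₀ and conclude
    set d₀ : ℕ := ⌈2 * (Pq - 1) / ε⌉₊ + 1 with hd₀
    refine ⟨e₁ + d₀, fun e he => ?_⟩
    set d : ℕ := e - e₁ with hd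
    have hed : e = e₁ + d := by omega
    have hdd₀ : d₀ ≤ d := by omega
    have hd1 : 1 ≤ d := by omega
    obtain ⟨n, hQn, hnbig⟩ := key d hd1
    have hsp := hQn.comp hbase
    rw [← pow_mul] at hsp
    have heq : g ^ (n * p ^ e₁) * (c * g ^ n₁) = c * g ^ (n * p ^ e₁ + n₁) := by
      rw [pow_add]; ring
    rw [heq, show d + e₁ = e by omega] at hsp
    -- numeric bound
    have hnum : ⌊t * (p:ℚ) ^ e⌋₊ ≤ n * p ^ e₁ + n₁ := by
      have hpd2 : 2 * (Pq - 1) / ε + 1 ≤ (p:ℚ) ^ d := by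
        have hnd : (d : ℚ) + 1 ≤ (p : ℚ) ^ d := by
          have h1 : d < 2 ^ d := Nat.lt_two_pow_self
          have h2 : 2 ^ d ≤ p ^ d := Nat.pow_le_pow_left hp.two_le d
          have : d + 1 ≤ p ^ d := by omega
          exact_mod_cast this
        have hceil : 2 * (Pq - 1) / ε ≤ (⌈2 * (Pq - 1) / ε⌉₊ : ℚ) := Nat.le_ceil _
        have hd₀d : (d₀ : ℚ) ≤ (d : ℚ) := by exact_mod_cast hdd₀
        have : ((d₀ : ℕ) : ℚ) = (⌈2 * (Pq - 1) / ε⌉₊ : ℚ) + 1 := by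
          rw [hd₀]; push_cast; ring
        linarith
      have hεX : 2 * (Pq - 1) ≤ ε * ((p:ℚ) ^ d - 1) := by
        have h1 : 2 * (Pq - 1) / ε ≤ (p:ℚ) ^ d - 1 := by linarith
        have h2 := mul_le_mul_of_nonneg_left h1 (le_of_lt hεpos)
        rwa [mul_div_cancel₀ _ (ne_of_gt hεpos)] at h2
      have hPqpos : (0:ℚ) < Pq - 1 := by linarith
      have hnbig' : (t * (Pq - 1) + ε) * ((p:ℚ) ^ d - 1) ≤ ((n:ℚ) + 1) * (Pq - 1) := by
        rwa [← hm₀eq]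
      have hn1 : t * ((p:ℚ) ^ d - 1) + 2 ≤ (n:ℚ) + 1 := by
        have hmul : (t * ((p:ℚ) ^ d - 1) + 2) * (Pq - 1) ≤ ((n:ℚ) + 1) * (Pq - 1) := by
          nlinarith
        exact le_of_mul_le_mul_right hmul hPqpos
      have hpe : (p:ℚ) ^ e = (p:ℚ) ^ e₁ * (p:ℚ) ^ d := by rw [hed, pow_add]
      have hpe₁1 : (1:ℚ) ≤ (p:ℚ) ^ e₁ := by
        calc (1:ℚ) = 1 ^ e₁ := (one_pow e₁).symm
          _ ≤ (p:ℚ) ^ e₁ := pow_le_pow_left₀ (by norm_num) (by linarith) e₁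
      have hfin : t * (p:ℚ) ^ e ≤ ((n * p ^ e₁ + n₁ : ℕ) : ℚ) := by
        push_cast
        have hstep := mul_le_mul_of_nonneg_right
          (show t * ((p:ℚ) ^ d - 1) + 1 ≤ (n:ℚ) by linarith)
          (show (0:ℚ) ≤ (p:ℚ) ^ e₁ by linarith)
        rw [hpe]; nlinarith
      calc ⌊t * (p:ℚ) ^ e⌋₊ ≤ ⌊((n * p ^ e₁ + n₁ : ℕ) : ℚ)⌋₊ := Nat.floor_le_floor hfin
        _ = n * p ^ e₁ + n₁ := Nat.floor_natCast _
    rw [show n * p ^ e₁ + n₁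
        = ⌊t * (p:ℚ) ^ e⌋₊ + (n * p ^ e₁ + n₁ - ⌊t * (p:ℚ) ^ e⌋₊) by omega,
      pow_add, ← mul_assoc] at hsp
    exact hsp.of_mul_right _
  · -- easy direction
    intro H c hc
    obtain ⟨e₀, hH⟩ := H c hc
    refine ⟨max 1 e₀, le_max_left _ _, ?_⟩
    have hsp := hH (max 1 e₀) (le_max_right _ _)
    set e := max 1 e₀
    have hfl : ⌊t * ((p : ℚ) ^ e - 1)⌋₊ ≤ ⌊t * (p : ℚ) ^ e⌋₊ := by
      apply Nat.floor_le_floor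
      nlinarith [pow_pos hppos e]
    rw [show ⌊t * (p : ℚ) ^ e⌋₊
        = ⌊t * ((p : ℚ) ^ e - 1)⌋₊ + (⌊t * (p : ℚ) ^ e⌋₊ - ⌊t * ((p : ℚ) ^ e - 1)⌋₊) by omega,
      pow_add, ← mul_assoc] at hsp
    exact hsp.of_mul_right _
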